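/- Let a(x,t) = Σ_{k∈ℤ} â_k(x) e^{ikt} with each â_k Riemann integrable on [0,1] and ⦀a⦀ = Σ_k ‖â_k‖_∞ < ∞, and suppose every T_n(a) is normal. Then for all nonnegative integers p, q, Tr[T_n(a)^p (T_n(a)^*)^q] = ((n+1)/(2π)) ∫_0^1 ∫_0^{2π} a(x,t)^p · conj(a(x,t))^q dt dx + o(n) as n → ∞. -/

import Mathlib

open Filter Matrix

/-- The Kac–Murdock–Szegő matrix `[â_{j-i}((i+j)/(2n+2))]_{i,j=0}^n`. -/
noncomputable def kms (a : ℤ → ℝ → ℂ) (n : ℕ) : Matrix (Fin (n+1)) (Fin (n+1)) ℂ :=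
  fun i j => a ((j : ℤ) - (i : ℤ)) (((i : ℝ) + (j : ℝ)) / (2 * (n : ℝ) + 2))

/-- The sup norm `‖f‖_∞` over `[0,1]`. -/
noncomputable def supNorm (f : ℝ → ℂ) : ℝ := ⨆ x : Set.Icc (0:ℝ) 1, ‖f x‖

/-- The symbol `a(x,t) = Σ_k â_k(x) e^{ikt}`. -/
noncomputable def symbolFun (a : ℤ → ℝ → ℂ) (x t : ℝ) : ℂ :=
  ∑' k : ℤ, a k x * Complex.exp ((k : ℂ) * t * Complex.I)

/-- Riemann integrability on `[0,1]` (Lebesgue's criterion: bounded and a.e. continuous). -/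
def RiemannIntegrableOn01 (f : ℝ → ℂ) : Prop :=
  (∃ M, ∀ x ∈ Set.Icc (0:ℝ) 1, ‖f x‖ ≤ M) ∧
  ∀ᵐ x ∂(MeasureTheory.volume.restrict (Set.Icc (0:ℝ) 1)),
    ContinuousWithinAt f (Set.Icc (0:ℝ) 1) x

open Filter Matrix Set MeasureTheory Topology

namespace KMSaux

noncomputable def SN (c : ℤ → ℝ → ℂ) (k : ℤ) : ℝ := supNorm (c k)

structure Good (c : ℤ → ℝ → ℂ) : Prop where
  cont : ∀ k, ∀ᵐ x ∂(volume.restrict (Icc (0:ℝ) 1)), ContinuousWithinAt (c k) (Icc (0:ℝ) 1) x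
  bdd : ∀ k, BddAbove (Set.range fun x : Icc (0:ℝ) 1 => ‖c k x‖)
  sum : Summable (SN c)

lemma SN_nonneg (c : ℤ → ℝ → ℂ) (k : ℤ) : 0 ≤ SN c k :=
  Real.iSup_nonneg fun x => norm_nonneg _

lemma norm_le_SN {c : ℤ → ℝ → ℂ} (hc : Good c) (k : ℤ) {x : ℝ} (hx : x ∈ Icc (0:ℝ) 1) :
    ‖c k x‖ ≤ SN c k := by
  exact le_ciSup (hc.bdd k) (⟨x, hx⟩ : Icc (0:ℝ) 1)

noncomputable def S (c : ℤ → ℝ → ℂ) : ℝ := ∑' k, SN c k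

noncomputable def SK (K : ℕ) (c : ℤ → ℝ → ℂ) : ℝ := ∑ k ∈ Finset.Icc (-(K:ℤ)) K, SN c k

lemma S_nonneg (c : ℤ → ℝ → ℂ) : 0 ≤ S c := tsum_nonneg fun k => SN_nonneg c k

lemma SK_nonneg (K : ℕ) (c : ℤ → ℝ → ℂ) : 0 ≤ SK K c :=
  Finset.sum_nonneg fun k _ => SN_nonneg c k

lemma SK_le_S {c : ℤ → ℝ → ℂ} (hc : Good c) (K : ℕ) : SK K c ≤ S c :=
  Summable.sum_le_tsum _ (fun k _ => SN_nonneg c k) hc.sum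

noncomputable def PS : List (ℤ → ℝ → ℂ) → ℝ
  | [] => 1
  | c :: L => S c * PS L

noncomputable def PSK (K : ℕ) : List (ℤ → ℝ → ℂ) → ℝ
  | [] => 1
  | c :: L => SK K c * PSK K L

abbrev GoodL (L : List (ℤ → ℝ → ℂ)) : Prop := ∀ c ∈ L, Good c

lemma PS_nonneg (L : List (ℤ → ℝ → ℂ)) : 0 ≤ PS L := by
  induction L with
  | nil => norm_num [PS]
  | cons c L ih => exact mul_nonneg (S_nonneg c) ih

lemma PSK_nonneg (K : ℕ) (L : List (ℤ → ℝ → ℂ)) : 0 ≤ PSK K L := by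
  induction L with
  | nil => norm_num [PSK]
  | cons c L ih => exact mul_nonneg (SK_nonneg K c) ih

lemma PSK_le_PS {L : List (ℤ → ℝ → ℂ)} (hL : GoodL L) (K : ℕ) : PSK K L ≤ PS L := by
  induction L with
  | nil => norm_num [PSK, PS]
  | cons c L ih =>
      have hc : Good c := hL c (by simp)
      have hL' : GoodL L := fun d hd => hL d (by simp [hd])
      exact mul_le_mul (SK_le_S hc K) (ih hL') (PSK_nonneg K L) (S_nonneg c)

/-- clamp to `[0,1]` -/
noncomputable def cl (y : ℝ) : ℝ := max 0 (min 1 y)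

lemma cl_mem (y : ℝ) : cl y ∈ Icc (0:ℝ) 1 :=
  ⟨le_max_left _ _, max_le (by norm_num) (min_le_left _ _)⟩

lemma cl_eq_self {y : ℝ} (hy : y ∈ Icc (0:ℝ) 1) : cl y = y := by
  have h1 := hy.1; have h2 := hy.2
  rw [cl, min_eq_right h2, max_eq_right h1]

lemma continuous_cl : Continuous cl :=
  continuous_const.max (continuous_const.min continuous_id)

lemma tendsto_cl {x : ℝ} (hx : x ∈ Icc (0:ℝ) 1) {u : ℕ → ℝ} (hu : Tendsto u atTop (𝓝 x)) :
    Tendsto (fun n => cl (u n)) atTop (𝓝[Icc (0:ℝ) 1] x) := by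
  rw [tendsto_nhdsWithin_iff]
  constructor
  · have := (continuous_cl.tendsto x).comp hu
    rwa [cl_eq_self hx] at this
  · exact Eventually.of_forall fun n => cl_mem _

end KMSaux

namespace KMSaux
open Filter Matrix Set MeasureTheory Topology

lemma sum_shift_le_tsum {g : ℤ → ℝ} (hg : Summable g) (h0 : ∀ δ, 0 ≤ g δ) (n : ℕ)
    (i : Fin (n+1)) : ∑ k : Fin (n+1), g ((k:ℤ) - (i:ℤ)) ≤ ∑' δ, g δ := by
  have hinj : ∀ k ∈ Finset.univ, ∀ l ∈ Finset.univ,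
      ((k : Fin (n+1)):ℤ) - (i:ℤ) = ((l : Fin (n+1)):ℤ) - (i:ℤ) → k = l := by
    intro k _ l _ h
    have : (k:ℤ) = (l:ℤ) := by omega
    exact Fin.ext (by exact_mod_cast this)
  rw [show ∑ k : Fin (n+1), g ((k:ℤ) - (i:ℤ))
      = ∑ δ ∈ Finset.univ.image (fun k : Fin (n+1) => (k:ℤ) - (i:ℤ)), g δ from
    (Finset.sum_image hinj).symm]
  exact Summable.sum_le_tsum _ (fun k _ => h0 k) hg

lemma tsum_ite_Icc (g : ℤ → ℝ) (K : ℕ) :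
    ∑' δ : ℤ, (if |δ| ≤ (K:ℤ) then g δ else 0) = ∑ δ ∈ Finset.Icc (-(K:ℤ)) K, g δ := by
  rw [tsum_eq_sum (s := Finset.Icc (-(K:ℤ)) K)
    (by intro b hb; rw [if_neg]; simpa [Finset.mem_Icc, abs_le] using hb)]
  refine Finset.sum_congr rfl fun δ hδ => ?_
  rw [if_pos]; rwa [Finset.mem_Icc, ← abs_le] at hδ

lemma summable_ite_Icc (g : ℤ → ℝ) (K : ℕ) :
    Summable (fun δ : ℤ => if |δ| ≤ (K:ℤ) then g δ else 0) := by
  apply summable_of_ne_finset_zero (s := Finset.Icc (-(K:ℤ)) K)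
  intro b hb; rw [if_neg]; simpa [Finset.mem_Icc, abs_le] using hb

lemma tsum_tail {g : ℤ → ℝ} (hg : Summable g) (K : ℕ) :
    ∑' δ : ℤ, (if |δ| ≤ (K:ℤ) then 0 else g δ)
      = ∑' δ, g δ - ∑ δ ∈ Finset.Icc (-(K:ℤ)) K, g δ := by
  have h1 : ∀ δ : ℤ, (if |δ| ≤ (K:ℤ) then 0 else g δ)
      = g δ - (if |δ| ≤ (K:ℤ) then g δ else 0) := by intro δ; split <;> ring
  rw [tsum_congr h1, Summable.tsum_sub hg (summable_ite_Icc g K), tsum_ite_Icc]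

lemma summable_tail {g : ℤ → ℝ} (hg : Summable g) (h0 : ∀ δ, 0 ≤ g δ) (K : ℕ) :
    Summable (fun δ : ℤ => if |δ| ≤ (K:ℤ) then 0 else g δ) := by
  apply hg.of_nonneg_of_le
  · intro δ; split
    · exact le_rfl
    · exact h0 δ
  · intro δ; split
    · exact h0 δ
    · exact le_rfl

lemma sum_shift_ite_le {g : ℤ → ℝ} (hg : Summable g) (h0 : ∀ δ, 0 ≤ g δ) (n K : ℕ)
    (i : Fin (n+1)) :
    ∑ k : Fin (n+1), (if |(k:ℤ) - (i:ℤ)| ≤ (K:ℤ) then g ((k:ℤ) - (i:ℤ)) else 0)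
      ≤ ∑ δ ∈ Finset.Icc (-(K:ℤ)) K, g δ := by
  have := sum_shift_le_tsum (g := fun δ => if |δ| ≤ (K:ℤ) then g δ else 0)
    (summable_ite_Icc g K) (fun δ => by beta_reduce; split; exacts [h0 δ, le_rfl]) n i
  rwa [tsum_ite_Icc] at this

lemma sum_shift_tail_le {g : ℤ → ℝ} (hg : Summable g) (h0 : ∀ δ, 0 ≤ g δ) (n K : ℕ)
    (i : Fin (n+1)) :
    ∑ k : Fin (n+1), (if |(k:ℤ) - (i:ℤ)| ≤ (K:ℤ) then 0 else g ((k:ℤ) - (i:ℤ)))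
      ≤ ∑' δ, g δ - ∑ δ ∈ Finset.Icc (-(K:ℤ)) K, g δ := by
  have := sum_shift_le_tsum (g := fun δ => if |δ| ≤ (K:ℤ) then 0 else g δ)
    (summable_tail hg h0 K) (fun δ => by beta_reduce; split; exacts [le_rfl, h0 δ]) n i
  rwa [tsum_tail hg] at this

/-! matrices -/

noncomputable def kmsK (c : ℤ → ℝ → ℂ) (n K : ℕ) : Matrix (Fin (n+1)) (Fin (n+1)) ℂ :=
  fun i j => if |(j:ℤ) - (i:ℤ)| ≤ (K:ℤ) then kms c n i j else 0

noncomputable def Em (n : ℕ) (L : List (ℤ → ℝ → ℂ)) : Matrix (Fin (n+1)) (Fin (n+1)) ℂ :=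
  (L.map (fun c => kms c n)).prod

noncomputable def EmK (n K : ℕ) (L : List (ℤ → ℝ → ℂ)) : Matrix (Fin (n+1)) (Fin (n+1)) ℂ :=
  (L.map (fun c => kmsK c n K)).prod

@[simp] lemma Em_nil (n : ℕ) : Em n [] = 1 := rfl
@[simp] lemma Em_cons (n : ℕ) (c : ℤ → ℝ → ℂ) (L : List (ℤ → ℝ → ℂ)) :
    Em n (c :: L) = kms c n * Em n L := by simp [Em]
@[simp] lemma EmK_nil (n K : ℕ) : EmK n K [] = 1 := rfl
@[simp] lemma EmK_cons (n K : ℕ) (c : ℤ → ℝ → ℂ) (L : List (ℤ → ℝ → ℂ)) :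
    EmK n K (c :: L) = kmsK c n K * EmK n K L := by simp [EmK]

lemma kms_arg_mem (n : ℕ) (i j : Fin (n+1)) :
    ((i:ℝ) + (j:ℝ)) / (2 * (n:ℝ) + 2) ∈ Icc (0:ℝ) 1 := by
  have hi : (i:ℝ) ≤ n := by exact_mod_cast Nat.cast_le.mpr (Fin.is_le i)
  have hj : (j:ℝ) ≤ n := by exact_mod_cast Nat.cast_le.mpr (Fin.is_le j)
  have h0i : (0:ℝ) ≤ i := by positivity
  have h0j : (0:ℝ) ≤ j := by positivity
  constructor
  · positivity
  · rw [div_le_one (by positivity)]; linarith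

lemma norm_kms_le {c : ℤ → ℝ → ℂ} (hc : Good c) (n : ℕ) (i j : Fin (n+1)) :
    ‖kms c n i j‖ ≤ SN c ((j:ℤ) - (i:ℤ)) :=
  norm_le_SN hc _ (kms_arg_mem n i j)

lemma norm_kmsK_le {c : ℤ → ℝ → ℂ} (hc : Good c) (n K : ℕ) (i j : Fin (n+1)) :
    ‖kmsK c n K i j‖ ≤ if |(j:ℤ) - (i:ℤ)| ≤ (K:ℤ) then SN c ((j:ℤ) - (i:ℤ)) else 0 := by
  rw [kmsK]; split
  · exact norm_kms_le hc n i j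
  · simp

lemma norm_Em_le {L : List (ℤ → ℝ → ℂ)} (hL : GoodL L) (n : ℕ) (j : Fin (n+1)) :
    ∀ i, ‖Em n L i j‖ ≤ PS L := by
  induction L with
  | nil =>
      intro i
      rw [Em_nil, Matrix.one_apply, PS]
      split <;> norm_num
  | cons c L ih =>
      intro i
      have hc : Good c := hL c (by simp)
      have hL' : GoodL L := fun d hd => hL d (by simp [hd])
      rw [Em_cons, Matrix.mul_apply, PS]
      calc ‖∑ k, kms c n i k * Em n L k j‖ ≤ ∑ k, ‖kms c n i k * Em n L k j‖ :=
            norm_sum_le _ _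
        _ ≤ ∑ k : Fin (n+1), SN c ((k:ℤ) - (i:ℤ)) * PS L := by
            refine Finset.sum_le_sum fun k _ => ?_
            rw [norm_mul]
            exact mul_le_mul (norm_kms_le hc n i k) (ih hL' k) (norm_nonneg _)
              (SN_nonneg c _)
        _ = (∑ k : Fin (n+1), SN c ((k:ℤ) - (i:ℤ))) * PS L := by rw [Finset.sum_mul]
        _ ≤ S c * PS L := by
            exact mul_le_mul_of_nonneg_right
              (sum_shift_le_tsum hc.sum (SN_nonneg c) n i) (PS_nonneg L)

lemma norm_EmK_le {L : List (ℤ → ℝ → ℂ)} (hL : GoodL L) (n K : ℕ) (j : Fin (n+1)) :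
    ∀ i, ‖EmK n K L i j‖ ≤ PSK K L := by
  induction L with
  | nil =>
      intro i
      rw [EmK_nil, Matrix.one_apply, PSK]
      split <;> norm_num
  | cons c L ih =>
      intro i
      have hc : Good c := hL c (by simp)
      have hL' : GoodL L := fun d hd => hL d (by simp [hd])
      rw [EmK_cons, Matrix.mul_apply, PSK]
      calc ‖∑ k, kmsK c n K i k * EmK n K L k j‖
          ≤ ∑ k, ‖kmsK c n K i k * EmK n K L k j‖ := norm_sum_le _ _
        _ ≤ ∑ k : Fin (n+1),
              (if |(k:ℤ) - (i:ℤ)| ≤ (K:ℤ) then SN c ((k:ℤ) - (i:ℤ)) else 0) * PSK K L := by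
            refine Finset.sum_le_sum fun k _ => ?_
            rw [norm_mul]
            refine mul_le_mul (norm_kmsK_le hc n K i k) (ih hL' k) (norm_nonneg _) ?_
            split
            · exact SN_nonneg c _
            · exact le_rfl
        _ = (∑ k : Fin (n+1),
              (if |(k:ℤ) - (i:ℤ)| ≤ (K:ℤ) then SN c ((k:ℤ) - (i:ℤ)) else 0)) * PSK K L := by
            rw [Finset.sum_mul]
        _ ≤ SK K c * PSK K L := by
            exact mul_le_mul_of_nonneg_right
              (sum_shift_ite_le hc.sum (SN_nonneg c) n K i) (PSK_nonneg K L)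

lemma norm_Em_sub_EmK_le {L : List (ℤ → ℝ → ℂ)} (hL : GoodL L) (n K : ℕ) (j : Fin (n+1)) :
    ∀ i, ‖Em n L i j - EmK n K L i j‖ ≤ PS L - PSK K L := by
  induction L with
  | nil => intro i; simp [Em_nil, EmK_nil, PS, PSK]
  | cons c L ih =>
      intro i
      have hc : Good c := hL c (by simp)
      have hL' : GoodL L := fun d hd => hL d (by simp [hd])
      have hD : 0 ≤ PS L - PSK K L := sub_nonneg.mpr (PSK_le_PS hL' K)
      rw [Em_cons, EmK_cons, Matrix.mul_apply, Matrix.mul_apply, ← Finset.sum_sub_distrib]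
      calc ‖∑ k, (kms c n i k * Em n L k j - kmsK c n K i k * EmK n K L k j)‖
          ≤ ∑ k, ‖kms c n i k * Em n L k j - kmsK c n K i k * EmK n K L k j‖ :=
            norm_sum_le _ _
        _ ≤ ∑ k : Fin (n+1), (SN c ((k:ℤ) - (i:ℤ)) * (PS L - PSK K L)
              + (if |(k:ℤ) - (i:ℤ)| ≤ (K:ℤ) then 0 else SN c ((k:ℤ) - (i:ℤ))) * PSK K L) := by
            refine Finset.sum_le_sum fun k _ => ?_
            have hsplit : kms c n i k * Em n L k j - kmsK c n K i k * EmK n K L k j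
                = kms c n i k * (Em n L k j - EmK n K L k j)
                  + (kms c n i k - kmsK c n K i k) * EmK n K L k j := by ring
            rw [hsplit]
            refine (norm_add_le _ _).trans (add_le_add ?_ ?_)
            · rw [norm_mul]
              exact mul_le_mul (norm_kms_le hc n i k) (ih hL' k) (norm_nonneg _)
                (SN_nonneg c _)
            · rw [norm_mul]
              refine mul_le_mul ?_ (norm_EmK_le hL' n K j k) (norm_nonneg _) ?_
              · rw [kmsK]; split
                · simp
                · simpa using norm_kms_le hc n i k
              · split
                · exact le_rfl
                · exact SN_nonneg c _
        _ ≤ S c * (PS L - PSK K L) + (S c - SK K c) * PSK K L := by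
            rw [Finset.sum_add_distrib, ← Finset.sum_mul, ← Finset.sum_mul]
            refine add_le_add (mul_le_mul_of_nonneg_right
              (sum_shift_le_tsum hc.sum (SN_nonneg c) n i) hD)
              (mul_le_mul_of_nonneg_right
                (sum_shift_tail_le hc.sum (SN_nonneg c) n K i) (PSK_nonneg K L))
        _ = PS (c :: L) - PSK K (c :: L) := by rw [PS, PSK, S]; ring

end KMSaux

namespace KMSaux
open Filter Matrix Set MeasureTheory Topology

noncomputable def FF (n K : ℕ) : List (ℤ → ℝ → ℂ) → ℤ → ℤ → ℂ
  | [], _, s => if s = 0 then 1 else 0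
  | c :: L, i, s => ∑ δ ∈ Finset.Icc (-(K:ℤ)) K,
      c δ (cl ((2*(i:ℝ) + 2*(s:ℝ) + (δ:ℝ)) / (2*(n:ℝ) + 2))) * FF n K L i (s + δ)

noncomputable def HK (K : ℕ) : List (ℤ → ℝ → ℂ) → ℝ → ℤ → ℂ
  | [], _, s => if s = 0 then 1 else 0
  | c :: L, x, s => ∑ δ ∈ Finset.Icc (-(K:ℤ)) K, c δ x * HK K L x (s + δ)

noncomputable def HI : List (ℤ → ℝ → ℂ) → ℝ → ℤ → ℂ
  | [], _, s => if s = 0 then 1 else 0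
  | c :: L, x, s => ∑' δ : ℤ, c δ x * HI L x (s + δ)

lemma norm_FF_le {L : List (ℤ → ℝ → ℂ)} (hL : GoodL L) (n K : ℕ) :
    ∀ (i s : ℤ), ‖FF n K L i s‖ ≤ PSK K L := by
  induction L with
  | nil => intro i s; rw [FF, PSK]; split <;> norm_num
  | cons c L ih =>
      intro i s
      have hc : Good c := hL c (by simp)
      have hL' : GoodL L := fun d hd => hL d (by simp [hd])
      rw [FF, PSK]
      calc ‖∑ δ ∈ Finset.Icc (-(K:ℤ)) K,
            c δ (cl ((2*(i:ℝ) + 2*(s:ℝ) + (δ:ℝ)) / (2*(n:ℝ) + 2))) * FF n K L i (s + δ)‖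
          ≤ ∑ δ ∈ Finset.Icc (-(K:ℤ)) K, SN c δ * PSK K L := by
            refine (norm_sum_le _ _).trans (Finset.sum_le_sum fun δ _ => ?_)
            rw [norm_mul]
            exact mul_le_mul (norm_le_SN hc δ (cl_mem _)) (ih hL' i (s + δ))
              (norm_nonneg _) (SN_nonneg c δ)
        _ = SK K c * PSK K L := by rw [← Finset.sum_mul]; rfl

lemma norm_HK_le {L : List (ℤ → ℝ → ℂ)} (hL : GoodL L) (K : ℕ) {x : ℝ}
    (hx : x ∈ Icc (0:ℝ) 1) : ∀ (s : ℤ), ‖HK K L x s‖ ≤ PSK K L := by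
  induction L with
  | nil => intro s; rw [HK, PSK]; split <;> norm_num
  | cons c L ih =>
      intro s
      have hc : Good c := hL c (by simp)
      have hL' : GoodL L := fun d hd => hL d (by simp [hd])
      rw [HK, PSK]
      calc ‖∑ δ ∈ Finset.Icc (-(K:ℤ)) K, c δ x * HK K L x (s + δ)‖
          ≤ ∑ δ ∈ Finset.Icc (-(K:ℤ)) K, SN c δ * PSK K L := by
            refine (norm_sum_le _ _).trans (Finset.sum_le_sum fun δ _ => ?_)
            rw [norm_mul]
            exact mul_le_mul (norm_le_SN hc δ hx) (ih hL' (s + δ))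
              (norm_nonneg _) (SN_nonneg c δ)
        _ = SK K c * PSK K L := by rw [← Finset.sum_mul]; rfl

lemma norm_HI_le {L : List (ℤ → ℝ → ℂ)} (hL : GoodL L) {x : ℝ}
    (hx : x ∈ Icc (0:ℝ) 1) : ∀ (s : ℤ), ‖HI L x s‖ ≤ PS L := by
  induction L with
  | nil => intro s; rw [HI, PS]; split <;> norm_num
  | cons c L ih =>
      intro s
      have hc : Good c := hL c (by simp)
      have hL' : GoodL L := fun d hd => hL d (by simp [hd])
      have hterm : ∀ δ : ℤ, ‖c δ x * HI L x (s + δ)‖ ≤ SN c δ * PS L := by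
        intro δ
        rw [norm_mul]
        exact mul_le_mul (norm_le_SN hc δ hx) (ih hL' (s + δ)) (norm_nonneg _)
          (SN_nonneg c δ)
      have hsum : Summable fun δ : ℤ => ‖c δ x * HI L x (s + δ)‖ :=
        (hc.sum.mul_right (PS L)).of_nonneg_of_le (fun δ => norm_nonneg _) hterm
      rw [HI, PS]
      calc ‖∑' δ : ℤ, c δ x * HI L x (s + δ)‖ ≤ ∑' δ : ℤ, ‖c δ x * HI L x (s + δ)‖ :=
            norm_tsum_le_tsum_norm hsum
        _ ≤ ∑' δ : ℤ, SN c δ * PS L := Summable.tsum_le_tsum hterm hsum (hc.sum.mul_right (PS L))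
        _ = S c * PS L := by rw [tsum_mul_right]; rfl

lemma summable_HI_term {L : List (ℤ → ℝ → ℂ)} (hL : GoodL L) {c : ℤ → ℝ → ℂ}
    (hc : Good c) {x : ℝ} (hx : x ∈ Icc (0:ℝ) 1) (s : ℤ) :
    Summable fun δ : ℤ => c δ x * HI L x (s + δ) := by
  apply Summable.of_norm
  refine (hc.sum.mul_right (PS L)).of_nonneg_of_le (fun δ => norm_nonneg _) fun δ => ?_
  rw [norm_mul]
  exact mul_le_mul (norm_le_SN hc δ hx) (norm_HI_le hL hx (s + δ)) (norm_nonneg _)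
    (SN_nonneg c δ)

lemma norm_HI_sub_HK_le {L : List (ℤ → ℝ → ℂ)} (hL : GoodL L) (K : ℕ) {x : ℝ}
    (hx : x ∈ Icc (0:ℝ) 1) : ∀ (s : ℤ), ‖HI L x s - HK K L x s‖ ≤ PS L - PSK K L := by
  induction L with
  | nil => intro s; rw [HI, HK, PS, PSK]; simp
  | cons c L ih =>
      intro s
      have hc : Good c := hL c (by simp)
      have hL' : GoodL L := fun d hd => hL d (by simp [hd])
      have hD : 0 ≤ PS L - PSK K L := sub_nonneg.mpr (PSK_le_PS hL' K)
      set f : ℤ → ℂ := fun δ => c δ x * HI L x (s + δ) with hf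
      set g : ℤ → ℂ := fun δ => if |δ| ≤ (K:ℤ) then c δ x * HK K L x (s + δ) else 0 with hg
      have hgsum : Summable g := by
        apply summable_of_ne_finset_zero (s := Finset.Icc (-(K:ℤ)) K)
        intro b hb; rw [hg]; beta_reduce; rw [if_neg]
        simpa [Finset.mem_Icc, abs_le] using hb
      have hfsum : Summable f := summable_HI_term hL' hc hx s
      have hHK : HK K (c :: L) x s = ∑' δ, g δ := by
        rw [HK, tsum_eq_sum (s := Finset.Icc (-(K:ℤ)) K)]
        · refine Finset.sum_congr rfl fun δ hδ => ?_
          rw [hg]; beta_reduce; rw [if_pos]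
          rwa [Finset.mem_Icc, ← abs_le] at hδ
        · intro b hb; rw [hg]; beta_reduce; rw [if_neg]
          simpa [Finset.mem_Icc, abs_le] using hb
      set u : ℤ → ℝ := fun δ => SN c δ * (PS L - PSK K L)
        + (if |δ| ≤ (K:ℤ) then 0 else SN c δ * PSK K L) with hu
      have husum : Summable u :=
        (hc.sum.mul_right _).add (summable_tail (hc.sum.mul_right _)
          (fun δ => mul_nonneg (SN_nonneg c δ) (PSK_nonneg K L)) K)
      have hbound : ∀ δ : ℤ, ‖f δ - g δ‖ ≤ u δ := by
        intro δ
        rw [hf, hg, hu]; beta_reduce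
        split
        · rw [show c δ x * HI L x (s + δ) - c δ x * HK K L x (s + δ)
              = c δ x * (HI L x (s + δ) - HK K L x (s + δ)) from by ring, norm_mul]
          rw [add_zero]
          exact mul_le_mul (norm_le_SN hc δ hx) (ih hL' (s + δ)) (norm_nonneg _)
            (SN_nonneg c δ)
        · rw [sub_zero, norm_mul]
          have h1 : ‖c δ x‖ * ‖HI L x (s + δ)‖ ≤ SN c δ * PS L :=
            mul_le_mul (norm_le_SN hc δ hx) (norm_HI_le hL' hx (s + δ)) (norm_nonneg _)
              (SN_nonneg c δ)
          have : SN c δ * PS L = SN c δ * (PS L - PSK K L) + SN c δ * PSK K L := by ring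
          linarith
      have hnormsum : Summable fun δ => ‖f δ - g δ‖ :=
        husum.of_nonneg_of_le (fun δ => norm_nonneg _) hbound
      rw [HI, hHK, ← Summable.tsum_sub hfsum hgsum]
      calc ‖∑' δ, (f δ - g δ)‖ ≤ ∑' δ, ‖f δ - g δ‖ := norm_tsum_le_tsum_norm hnormsum
        _ ≤ ∑' δ, u δ := Summable.tsum_le_tsum hbound hnormsum husum
        _ = S c * (PS L - PSK K L) + (S c - SK K c) * PSK K L := by
            rw [hu, Summable.tsum_add (hc.sum.mul_right _) (summable_tail (hc.sum.mul_right _)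
              (fun δ => mul_nonneg (SN_nonneg c δ) (PSK_nonneg K L)) K),
              tsum_mul_right, tsum_tail (hc.sum.mul_right _) K, tsum_mul_right,
              ← Finset.sum_mul]
            rw [S, SK]; ring
        _ = PS (c :: L) - PSK K (c :: L) := by rw [PS, PSK, S]; ring

lemma tendsto_SK {c : ℤ → ℝ → ℂ} (hc : Good c) :
    Tendsto (fun K : ℕ => SK K c) atTop (𝓝 (S c)) := by
  have h1 : Tendsto (fun K : ℕ => Finset.Icc (-(K:ℤ)) K) atTop atTop := by
    apply Filter.tendsto_atTop_finset_of_monotone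
    · intro K1 K2 h
      apply Finset.Icc_subset_Icc <;> omega
    · intro δ
      refine ⟨δ.natAbs, ?_⟩
      rw [Finset.mem_Icc]
      constructor <;> [skip; exact Int.le_natAbs] <;> rw [neg_le] <;>
        simpa using Int.le_natAbs (a := -δ)
  exact (hc.sum.hasSum.comp h1)

lemma tendsto_PSK {L : List (ℤ → ℝ → ℂ)} (hL : GoodL L) :
    Tendsto (fun K : ℕ => PSK K L) atTop (𝓝 (PS L)) := by
  induction L with
  | nil => simpa [PSK, PS] using tendsto_const_nhds
  | cons c L ih =>
      have hc : Good c := hL c (by simp)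
      have hL' : GoodL L := fun d hd => hL d (by simp [hd])
      simpa [PSK, PS] using (tendsto_SK hc).mul (ih hL')

end KMSaux

namespace KMSaux
open Filter Matrix Set MeasureTheory Topology

lemma EmK_eq_FF {L : List (ℤ → ℝ → ℂ)} (hL : GoodL L) (n K : ℕ) :
    ∀ (i₀ : Fin (n+1)) (s : ℤ) (j : Fin (n+1)), (j:ℤ) = (i₀:ℤ) + s →
    0 ≤ (i₀:ℤ) + s - (K:ℤ) * L.length → (i₀:ℤ) + s + (K:ℤ) * L.length ≤ (n:ℤ) →
    EmK n K L j i₀ = FF n K L (i₀:ℤ) s := by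
  induction L with
  | nil =>
      intro i₀ s j hj _ _
      have hji : (j = i₀) ↔ (s = 0) := by rw [Fin.ext_iff]; omega
      rw [EmK_nil, Matrix.one_apply, FF]
      by_cases h : s = 0
      · rw [if_pos (hji.mpr h), if_pos h]
      · rw [if_neg (fun hc => h (hji.mp hc)), if_neg h]
  | cons c L ih =>
      intro i₀ s j hj hlo hhi
      have hc : Good c := hL c (by simp)
      have hL' : GoodL L := fun d hd => hL d (by simp [hd])
      have hlen : ((c :: L).length : ℤ) = (L.length : ℤ) + 1 := by
        simp [List.length_cons]
      have hKL : (0:ℤ) ≤ (K:ℤ) * L.length := by positivity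
      have hlo' : 0 ≤ (i₀:ℤ) + s - ((K:ℤ) * L.length + K) := by
        rw [hlen] at hlo; nlinarith
      have hhi' : (i₀:ℤ) + s + ((K:ℤ) * L.length + K) ≤ (n:ℤ) := by
        rw [hlen] at hhi; nlinarith
      have hi₀n := i₀.isLt
      have hjn := j.isLt
      -- the inverse map
      have hkf : ∀ δ ∈ Finset.Icc (-(K:ℤ)) K, ((i₀:ℤ) + s + δ).toNat < n + 1 := by
        intro δ hδ
        rw [Finset.mem_Icc] at hδ
        omega
      rw [EmK_cons, Matrix.mul_apply, FF]
      have hstep : ∀ k : Fin (n+1), kmsK c n K j k * EmK n K L k i₀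
          = if |(k:ℤ) - (j:ℤ)| ≤ (K:ℤ) then kms c n j k * EmK n K L k i₀ else 0 := by
        intro k
        rw [kmsK]
        split <;> simp
      rw [Finset.sum_congr rfl (fun k _ => hstep k), ← Finset.sum_filter]
      refine Finset.sum_nbij' (i := fun k : Fin (n+1) => (k:ℤ) - (j:ℤ))
        (j := fun δ : ℤ => (⟨min ((i₀:ℤ) + s + δ).toNat n, by omega⟩ : Fin (n+1)))
        ?_ ?_ ?_ ?_ ?_
      · intro k hk
        rw [Finset.mem_filter] at hk
        rw [Finset.mem_Icc, ← abs_le]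
        exact hk.2
      · intro δ hδ
        have h1 := hkf δ hδ
        rw [Finset.mem_Icc] at hδ
        rw [Finset.mem_filter]
        refine ⟨Finset.mem_univ _, ?_⟩
        have : ((⟨min ((i₀:ℤ) + s + δ).toNat n, by omega⟩ : Fin (n+1)) : ℤ)
            = (i₀:ℤ) + s + δ := by
          simp only [Fin.val_mk]
          omega
        rw [this, hj]
        rw [abs_le]
        omega
      · intro k hk
        rw [Finset.mem_filter] at hk
        have hk2 := abs_le.mp hk.2
        have hkn := k.isLt
        apply Fin.ext
        simp only [Fin.val_mk]
        omega
      · intro δ hδ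
        have h1 := hkf δ hδ
        rw [Finset.mem_Icc] at hδ
        simp only [Fin.val_mk]
        omega
      · intro k hk
        rw [Finset.mem_filter] at hk
        have hk2 := abs_le.mp hk.2
        have hkn := k.isLt
        -- value equality
        have harg : ((j:ℝ) + (k:ℝ)) / (2 * (n:ℝ) + 2)
            = (2*((i₀:ℤ):ℝ) + 2*(s:ℝ) + (((k:ℤ) - (j:ℤ) : ℤ):ℝ)) / (2*(n:ℝ) + 2) := by
          congr 1
          have : ((j:ℤ):ℝ) + ((k:ℤ):ℝ) = 2*((i₀:ℤ):ℝ) + 2*(s:ℝ) + (((k:ℤ) - (j:ℤ) : ℤ):ℝ) := by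
            push_cast
            have : ((j:ℕ):ℝ) = ((i₀:ℕ):ℝ) + (s:ℝ) := by exact_mod_cast congrArg Int.cast hj
            push_cast at this
            linarith
          push_cast at this ⊢
          linarith
        have hcl : cl ((2*((i₀:ℤ):ℝ) + 2*(s:ℝ) + (((k:ℤ) - (j:ℤ) : ℤ):ℝ)) / (2*(n:ℝ) + 2))
            = (2*((i₀:ℤ):ℝ) + 2*(s:ℝ) + (((k:ℤ) - (j:ℤ) : ℤ):ℝ)) / (2*(n:ℝ) + 2) := by
          rw [← harg]
          exact cl_eq_self (kms_arg_mem n j k)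
        have hkms : kms c n j k
            = c ((k:ℤ) - (j:ℤ)) (cl ((2*((i₀:ℤ):ℝ) + 2*(s:ℝ) + (((k:ℤ) - (j:ℤ) : ℤ):ℝ))
                / (2*(n:ℝ) + 2))) := by
          rw [hcl, kms, ← harg]
        rw [hkms]
        have hEF : EmK n K L k i₀ = FF n K L (i₀:ℤ) (s + ((k:ℤ) - (j:ℤ))) := by
          apply ih hL' i₀ (s + ((k:ℤ) - (j:ℤ))) k <;> omega
        rw [hEF]

end KMSaux

namespace KMSaux
open Filter Matrix Set MeasureTheory Topology

lemma tendsto_two_n : Tendsto (fun n : ℕ => 2*(n:ℝ)+2) atTop atTop := by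
  apply Filter.tendsto_atTop_add_const_right
  exact Tendsto.const_mul_atTop (by norm_num) tendsto_natCast_atTop_atTop

lemma tendsto_FF {L : List (ℤ → ℝ → ℂ)} (hL : GoodL L) (K : ℕ) {x : ℝ}
    (hx : x ∈ Icc (0:ℝ) 1)
    (hcont : ∀ c ∈ L, ∀ δ : ℤ, ContinuousWithinAt (c δ) (Icc (0:ℝ) 1) x)
    {u : ℕ → ℤ} (hu : Tendsto (fun n : ℕ => ((u n : ℝ))/((n:ℝ)+1)) atTop (𝓝 x)) :
    ∀ s : ℤ, Tendsto (fun n : ℕ => FF n K L (u n) s) atTop (𝓝 (HK K L x s)) := by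
  induction L with
  | nil =>
      intro s
      simp only [FF, HK]
      exact tendsto_const_nhds
  | cons c L ih =>
      intro s
      have hc : ∀ δ : ℤ, ContinuousWithinAt (c δ) (Icc (0:ℝ) 1) x :=
        hcont c (by simp)
      have hcont' : ∀ d ∈ L, ∀ δ : ℤ, ContinuousWithinAt (d δ) (Icc (0:ℝ) 1) x :=
        fun d hd => hcont d (by simp [hd])
      have hL' : GoodL L := fun d hd => hL d (by simp [hd])
      simp only [FF, HK]
      apply tendsto_finset_sum
      intro δ _
      have hpt : Tendsto (fun n : ℕ => (2*((u n : ℤ):ℝ) + 2*(s:ℝ) + (δ:ℝ))/(2*(n:ℝ)+2))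
          atTop (𝓝 x) := by
        have h1 : ∀ n : ℕ, (2*((u n : ℤ):ℝ) + 2*(s:ℝ) + (δ:ℝ))/(2*(n:ℝ)+2)
            = ((u n : ℤ):ℝ)/((n:ℝ)+1) + (2*(s:ℝ)+(δ:ℝ))/(2*(n:ℝ)+2) := by
          intro n
          have hn : (0:ℝ) < (n:ℝ)+1 := by positivity
          field_simp
          ring
        have h2 : Tendsto (fun n : ℕ => (2*(s:ℝ)+(δ:ℝ))/(2*(n:ℝ)+2)) atTop (𝓝 0) :=
          Tendsto.div_atTop tendsto_const_nhds tendsto_two_n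
        have := hu.add h2
        rw [add_zero] at this
        exact this.congr fun n => (h1 n).symm
      have heval : Tendsto (fun n : ℕ =>
          c δ (cl ((2*((u n : ℤ):ℝ) + 2*(s:ℝ) + (δ:ℝ))/(2*(n:ℝ)+2)))) atTop (𝓝 (c δ x)) :=
        (hc δ).tendsto.comp (tendsto_cl hx hpt)
      exact heval.mul (ih hL' hcont' (s + δ))

lemma tendsto_floor_div (x : ℝ) :
    Tendsto (fun n : ℕ => ((⌊((n:ℝ)+1) * x⌋ : ℤ) : ℝ) / ((n:ℝ)+1)) atTop (𝓝 x) := by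
  have h : ∀ n : ℕ, ‖((⌊((n:ℝ)+1)*x⌋:ℤ):ℝ)/((n:ℝ)+1) - x‖ ≤ 1/((n:ℝ)+1) := by
    intro n
    have hn : (0:ℝ) < (n:ℝ)+1 := by positivity
    have h1 := Int.floor_le (((n:ℝ)+1)*x)
    have h2 := Int.lt_floor_add_one (((n:ℝ)+1)*x)
    have heq : ((⌊((n:ℝ)+1)*x⌋:ℤ):ℝ)/((n:ℝ)+1) - x
        = (((⌊((n:ℝ)+1)*x⌋:ℤ):ℝ) - ((n:ℝ)+1)*x)/((n:ℝ)+1) := by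
      field_simp
    rw [Real.norm_eq_abs, heq, abs_div, abs_of_pos hn, div_le_div_iff₀ hn hn]
    have : |((⌊((n:ℝ)+1)*x⌋:ℤ):ℝ) - ((n:ℝ)+1)*x| ≤ 1 := by
      rw [abs_le]; constructor <;> linarith
    nlinarith
  have h0 : Tendsto (fun n : ℕ => (fun n : ℕ => ((⌊((n:ℝ)+1)*x⌋:ℤ):ℝ)/((n:ℝ)+1) - x) n)
      atTop (𝓝 0) :=
    squeeze_zero_norm h tendsto_one_div_add_atTop_nhds_zero_nat
  have := h0.add_const x
  simpa using this

lemma meas_step (n K : ℕ) (L : List (ℤ → ℝ → ℂ)) (μ : Measure ℝ) :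
    AEStronglyMeasurable (fun x : ℝ => FF n K L ⌊((n:ℝ)+1)*x⌋ 0) μ := by
  apply Measurable.aestronglyMeasurable
  have h1 : Measurable fun x : ℝ => ⌊((n:ℝ)+1)*x⌋ :=
    Int.measurable_floor.comp (measurable_const.mul measurable_id)
  exact (measurable_from_top (f := fun z : ℤ => FF n K L z 0)).comp h1

lemma ae_cont_list {L : List (ℤ → ℝ → ℂ)} (hL : GoodL L) :
    ∀ᵐ x ∂(volume.restrict (Icc (0:ℝ) 1)),
      ∀ c ∈ L, ∀ δ : ℤ, ContinuousWithinAt (c δ) (Icc (0:ℝ) 1) x := by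
  induction L with
  | nil => simp
  | cons c L ih =>
      have hc : Good c := hL c (by simp)
      have hL' : GoodL L := fun d hd => hL d (by simp [hd])
      have h1 : ∀ᵐ x ∂(volume.restrict (Icc (0:ℝ) 1)),
          ∀ δ : ℤ, ContinuousWithinAt (c δ) (Icc (0:ℝ) 1) x := by
        rw [ae_all_iff]; exact hc.cont
      filter_upwards [h1, ih hL'] with x hx1 hx2
      intro d hd δ
      rcases List.mem_cons.mp hd with h | h
      · subst h; exact hx1 δ
      · exact hx2 d h δ

end KMSaux

namespace KMSaux
open Filter Matrix Set MeasureTheory Topology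

lemma step_intervalIntegrable (n K : ℕ) {L : List (ℤ → ℝ → ℂ)} (hL : GoodL L)
    (A B : ℝ) :
    IntervalIntegrable (fun x : ℝ => FF n K L ⌊((n:ℝ)+1)*x⌋ 0) volume A B := by
  rw [intervalIntegrable_iff]
  constructor
  · exact (meas_step n K L _)
  · have : IsFiniteMeasure (volume.restrict (Set.uIoc A B)) :=
      ⟨by rw [Measure.restrict_apply_univ]; exact measure_Ioc_lt_top⟩
    apply HasFiniteIntegral.of_bounded (C := PSK K L)
    exact Eventually.of_forall fun x => norm_FF_le hL n K _ 0

lemma integral_piece (n K : ℕ) {L : List (ℤ → ℝ → ℂ)} (hL : GoodL L) (i : ℕ) :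
    ∫ x in ((i:ℝ)/((n:ℝ)+1))..(((i:ℝ)+1)/((n:ℝ)+1)), FF n K L ⌊((n:ℝ)+1)*x⌋ 0
      = (((n:ℝ)+1)⁻¹ : ℝ) • FF n K L (i:ℤ) 0 := by
  have hn : (0:ℝ) < (n:ℝ)+1 := by positivity
  have hle : (i:ℝ)/((n:ℝ)+1) ≤ ((i:ℝ)+1)/((n:ℝ)+1) :=
    (div_le_div_iff_of_pos_right hn).mpr (by linarith)
  rw [intervalIntegral.integral_of_le hle, integral_Ioc_eq_integral_Ioo]
  have hEq : EqOn (fun x : ℝ => FF n K L ⌊((n:ℝ)+1)*x⌋ 0)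
      (fun _ => FF n K L (i:ℤ) 0)
      (Ioo ((i:ℝ)/((n:ℝ)+1)) (((i:ℝ)+1)/((n:ℝ)+1))) := by
    intro x hx
    have h1 : (i:ℝ) < ((n:ℝ)+1)*x := by
      have h := hx.1; rw [div_lt_iff₀ hn] at h; linarith
    have h2 : ((n:ℝ)+1)*x < (i:ℝ)+1 := by
      have h := hx.2; rw [lt_div_iff₀ hn] at h; linarith
    have hfl : ⌊((n:ℝ)+1)*x⌋ = (i:ℤ) := by
      rw [Int.floor_eq_iff]
      constructor <;> push_cast <;> linarith
    simp only [hfl]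
  rw [setIntegral_congr_fun measurableSet_Ioo hEq, setIntegral_const, measureReal_def, Real.volume_Ioo]
  have : ((i:ℝ)+1)/((n:ℝ)+1) - (i:ℝ)/((n:ℝ)+1) = ((n:ℝ)+1)⁻¹ := by
    field_simp
    ring
  rw [this, ENNReal.toReal_ofReal (by positivity)]

lemma integral_step (n K : ℕ) {L : List (ℤ → ℝ → ℂ)} (hL : GoodL L) :
    ∫ x in Ioc (0:ℝ) 1, FF n K L ⌊((n:ℝ)+1)*x⌋ 0
      = ∑ i ∈ Finset.range (n+1), (((n:ℝ)+1)⁻¹ : ℝ) • FF n K L (i:ℤ) 0 := by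
  have hn : (0:ℝ) < (n:ℝ)+1 := by positivity
  have key := intervalIntegral.sum_integral_adjacent_intervals
    (a := fun i : ℕ => (i:ℝ)/((n:ℝ)+1)) (n := n+1) (μ := volume)
    (f := fun x : ℝ => FF n K L ⌊((n:ℝ)+1)*x⌋ 0)
    (fun k _ => step_intervalIntegrable n K hL _ _)
  simp only [Nat.cast_zero, zero_div, Nat.cast_add, Nat.cast_one] at key
  rw [show ((n:ℝ)+1)/((n:ℝ)+1) = 1 from by field_simp] at key
  rw [← intervalIntegral.integral_of_le (by norm_num : (0:ℝ) ≤ 1), ← key]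
  refine Finset.sum_congr rfl fun i _ => ?_
  have := integral_piece n K hL i
  simpa using this

lemma integrable_HK (K : ℕ) {L : List (ℤ → ℝ → ℂ)} (hL : GoodL L) :
    Integrable (fun x => HK K L x 0) (volume.restrict (Ioc (0:ℝ) 1)) := by
  have hlim : ∀ᵐ x ∂(volume.restrict (Ioc (0:ℝ) 1)),
      Tendsto (fun n : ℕ => FF n K L ⌊((n:ℝ)+1)*x⌋ 0) atTop (𝓝 (HK K L x 0)) := by
    have h1 := ae_restrict_of_ae_restrict_of_subset Ioc_subset_Icc_self (ae_cont_list hL)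
    have h2 : ∀ᵐ x ∂(volume.restrict (Ioc (0:ℝ) 1)), x ∈ Ioc (0:ℝ) 1 :=
      ae_restrict_mem measurableSet_Ioc
    filter_upwards [h1, h2] with x hx1 hx2
    exact tendsto_FF hL K (Ioc_subset_Icc_self hx2) hx1 (tendsto_floor_div x) 0
  have haesm : AEStronglyMeasurable (fun x => HK K L x 0)
      (volume.restrict (Ioc (0:ℝ) 1)) :=
    aestronglyMeasurable_of_tendsto_ae atTop (fun n => meas_step n K L _) hlim
  refine ⟨haesm, ?_⟩
  apply HasFiniteIntegral.of_bounded (C := PSK K L)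
  filter_upwards [ae_restrict_mem measurableSet_Ioc] with x hx
  exact norm_HK_le hL K (Ioc_subset_Icc_self hx) 0

lemma tendsto_step_integral (K : ℕ) {L : List (ℤ → ℝ → ℂ)} (hL : GoodL L) :
    Tendsto (fun n : ℕ => ∫ x in Ioc (0:ℝ) 1, FF n K L ⌊((n:ℝ)+1)*x⌋ 0) atTop
      (𝓝 (∫ x in Ioc (0:ℝ) 1, HK K L x 0)) := by
  apply tendsto_integral_of_dominated_convergence (bound := fun _ => PSK K L)
  · exact fun n => meas_step n K L _
  · exact integrable_const _
  · exact fun n => Eventually.of_forall fun x => norm_FF_le hL n K _ 0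
  · have h1 := ae_restrict_of_ae_restrict_of_subset Ioc_subset_Icc_self (ae_cont_list hL)
    have h2 : ∀ᵐ x ∂(volume.restrict (Ioc (0:ℝ) 1)), x ∈ Ioc (0:ℝ) 1 :=
      ae_restrict_mem measurableSet_Ioc
    filter_upwards [h1, h2] with x hx1 hx2
    exact tendsto_FF hL K (Ioc_subset_Icc_self hx2) hx1 (tendsto_floor_div x) 0

lemma integrable_HI {L : List (ℤ → ℝ → ℂ)} (hL : GoodL L) :
    Integrable (fun x => HI L x 0) (volume.restrict (Ioc (0:ℝ) 1)) := by
  have hlim : ∀ᵐ x ∂(volume.restrict (Ioc (0:ℝ) 1)),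
      Tendsto (fun K : ℕ => HK K L x 0) atTop (𝓝 (HI L x 0)) := by
    filter_upwards [ae_restrict_mem measurableSet_Ioc] with x hx
    have hxI := Ioc_subset_Icc_self hx
    have hb : ∀ K : ℕ, ‖HK K L x 0 - HI L x 0‖ ≤ PS L - PSK K L := by
      intro K
      rw [norm_sub_rev]
      exact norm_HI_sub_HK_le hL K hxI 0
    have h0 : Tendsto (fun K : ℕ => PS L - PSK K L) atTop (𝓝 0) := by
      have := (tendsto_PSK hL).const_sub (PS L)
      simpa using this
    have := squeeze_zero_norm hb h0
    have h2 := this.add_const (HI L x 0)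
    simpa using h2
  have haesm : AEStronglyMeasurable (fun x => HI L x 0)
      (volume.restrict (Ioc (0:ℝ) 1)) :=
    aestronglyMeasurable_of_tendsto_ae atTop (fun K => (integrable_HK K hL).1) hlim
  refine ⟨haesm, ?_⟩
  apply HasFiniteIntegral.of_bounded (C := PS L)
  filter_upwards [ae_restrict_mem measurableSet_Ioc] with x hx
  exact norm_HI_le hL (Ioc_subset_Icc_self hx) 0

lemma integral_HK_sub_HI (K : ℕ) {L : List (ℤ → ℝ → ℂ)} (hL : GoodL L) :
    ‖(∫ x in Ioc (0:ℝ) 1, HK K L x 0) - ∫ x in Ioc (0:ℝ) 1, HI L x 0‖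
      ≤ PS L - PSK K L := by
  rw [← integral_sub (integrable_HK K hL) (integrable_HI hL)]
  have hb : ∀ᵐ x ∂(volume.restrict (Ioc (0:ℝ) 1)),
      ‖HK K L x 0 - HI L x 0‖ ≤ PS L - PSK K L := by
    filter_upwards [ae_restrict_mem measurableSet_Ioc] with x hx
    rw [norm_sub_rev]
    exact norm_HI_sub_HK_le hL K (Ioc_subset_Icc_self hx) 0
  have := norm_integral_le_of_norm_le_const hb
  simpa using this

end KMSaux

namespace KMSaux
open Filter Matrix Set MeasureTheory Topology

lemma A1 (n K : ℕ) {L : List (ℤ → ℝ → ℂ)} (hL : GoodL L) :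
    ‖(∑ i : Fin (n+1), Em n L i i) - ∑ i : Fin (n+1), EmK n K L i i‖
      ≤ ((n:ℝ)+1) * (PS L - PSK K L) := by
  rw [← Finset.sum_sub_distrib]
  calc ‖∑ i : Fin (n+1), (Em n L i i - EmK n K L i i)‖
      ≤ ∑ i : Fin (n+1), ‖Em n L i i - EmK n K L i i‖ := norm_sum_le _ _
    _ ≤ ∑ _i : Fin (n+1), (PS L - PSK K L) :=
        Finset.sum_le_sum fun i _ => norm_Em_sub_EmK_le hL n K i i
    _ = ((n:ℝ)+1) * (PS L - PSK K L) := by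
        rw [Finset.sum_const, Finset.card_univ, Fintype.card_fin, nsmul_eq_mul]
        push_cast; ring

lemma A2 (n K : ℕ) {L : List (ℤ → ℝ → ℂ)} (hL : GoodL L) :
    ‖(∑ i : Fin (n+1), EmK n K L i i) - ∑ i : Fin (n+1), FF n K L (i:ℤ) 0‖
      ≤ (2*(K*L.length) : ℝ) * (2 * PS L) := by
  set m := K * L.length with hm
  rw [← Finset.sum_sub_distrib]
  have hgood : ∀ i : Fin (n+1), (m ≤ i.val ∧ i.val + m ≤ n) →
      EmK n K L i i - FF n K L (i:ℤ) 0 = 0 := by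
    intro i hi
    rw [sub_eq_zero]
    have hcast : ((K:ℤ) * (L.length:ℤ)) = ((m:ℕ):ℤ) := by rw [hm]; push_cast; ring
    refine EmK_eq_FF hL n K i 0 i (by ring) ?_ ?_
    · rw [hcast]; omega
    · rw [hcast]; omega
  have hbad : ∀ i : Fin (n+1), ‖EmK n K L i i - FF n K L (i:ℤ) 0‖ ≤ 2 * PS L := by
    intro i
    have h1 : ‖EmK n K L i i‖ ≤ PS L := (norm_EmK_le hL n K i i).trans (PSK_le_PS hL K)
    have h2 : ‖FF n K L (i:ℤ) 0‖ ≤ PS L := (norm_FF_le hL n K _ 0).trans (PSK_le_PS hL K)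
    calc ‖EmK n K L i i - FF n K L (i:ℤ) 0‖ ≤ ‖EmK n K L i i‖ + ‖FF n K L (i:ℤ) 0‖ :=
          norm_sub_le _ _
      _ ≤ 2 * PS L := by linarith
  set bad : Finset (Fin (n+1)) :=
    Finset.univ.filter (fun i : Fin (n+1) => ¬(m ≤ i.val ∧ i.val + m ≤ n)) with hbadset
  have hcard : bad.card ≤ 2 * m := by
    have hsub : bad ⊆ (Finset.univ.filter fun i : Fin (n+1) => i.val < m)
        ∪ (Finset.univ.filter fun i : Fin (n+1) => n < i.val + m) := by
      intro i hi
      have h1 : ¬(m ≤ i.val ∧ i.val + m ≤ n) := (Finset.mem_filter.mp hi).2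
      rw [Finset.mem_union]
      rcases Nat.lt_or_ge i.val m with h | h
      · exact Or.inl (Finset.mem_filter.mpr ⟨Finset.mem_univ _, h⟩)
      · refine Or.inr (Finset.mem_filter.mpr ⟨Finset.mem_univ _, ?_⟩)
        omega
    have hc1 : (Finset.univ.filter fun i : Fin (n+1) => i.val < m).card ≤ m := by
      have h := Finset.card_le_card_of_injOn (s := Finset.univ.filter
          fun i : Fin (n+1) => i.val < m) (t := Finset.range m)
          (fun i : Fin (n+1) => i.val) ?_ ?_
      · simpa using h
      · intro i hi
        have hi2 : i.val < m := (Finset.mem_filter.mp hi).2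
        simpa [Finset.mem_range] using hi2
      · intro i _ j _ h
        exact Fin.ext h
    have hc2 : (Finset.univ.filter fun i : Fin (n+1) => n < i.val + m).card ≤ m := by
      have h := Finset.card_le_card_of_injOn (s := Finset.univ.filter
          fun i : Fin (n+1) => n < i.val + m) (t := Finset.range m)
          (fun i : Fin (n+1) => n - i.val) ?_ ?_
      · simpa using h
      · intro i hi
        have hi2 : n < i.val + m := (Finset.mem_filter.mp hi).2
        rw [Finset.mem_coe, Finset.mem_range]
        show n - i.val < m
        omega
      · intro i hi j hj h
        have hi2 : n < i.val + m := (Finset.mem_filter.mp hi).2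
        have hj2 : n < j.val + m := (Finset.mem_filter.mp hj).2
        have hi' := i.isLt
        have hj' := j.isLt
        have h' : n - i.val = n - j.val := h
        apply Fin.ext
        omega
    calc bad.card ≤ _ := Finset.card_le_card hsub
      _ ≤ _ := Finset.card_union_le _ _
      _ ≤ 2 * m := by omega
  calc ‖∑ i : Fin (n+1), (EmK n K L i i - FF n K L (i:ℤ) 0)‖
      ≤ ∑ i : Fin (n+1), ‖EmK n K L i i - FF n K L (i:ℤ) 0‖ := norm_sum_le _ _
    _ = ∑ i ∈ bad, ‖EmK n K L i i - FF n K L (i:ℤ) 0‖ := by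
        rw [hbadset]
        rw [← Finset.sum_filter_add_sum_filter_not Finset.univ
          (fun i : Fin (n+1) => ¬(m ≤ i.val ∧ i.val + m ≤ n))]
        have : ∑ i ∈ Finset.univ.filter
            (fun i : Fin (n+1) => ¬¬(m ≤ i.val ∧ i.val + m ≤ n)),
            ‖EmK n K L i i - FF n K L (i:ℤ) 0‖ = 0 := by
          apply Finset.sum_eq_zero
          intro i hi
          rw [Finset.mem_filter, not_not] at hi
          rw [hgood i hi.2, norm_zero]
        rw [this, add_zero]
    _ ≤ ∑ _i ∈ bad, (2 * PS L) := Finset.sum_le_sum fun i _ => hbad i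
    _ = (bad.card : ℝ) * (2 * PS L) := by rw [Finset.sum_const, nsmul_eq_mul]
    _ ≤ (2*(K*L.length) : ℝ) * (2 * PS L) := by
        apply mul_le_mul_of_nonneg_right
        · exact_mod_cast hcard
        · linarith [PS_nonneg L]

lemma master {L : List (ℤ → ℝ → ℂ)} (hL : GoodL L) :
    Tendsto (fun n : ℕ => (∑ i : Fin (n+1), Em n L i i) / ((n:ℂ)+1)) atTop
      (𝓝 (∫ x in Ioc (0:ℝ) 1, HI L x 0)) := by
  rw [Metric.tendsto_atTop]
  intro ε hε
  -- choose K
  obtain ⟨K, hK⟩ : ∃ K : ℕ, PS L - PSK K L < ε/8 := by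
    have h0 : Tendsto (fun K : ℕ => PS L - PSK K L) atTop (𝓝 0) := by
      have := (tendsto_PSK hL).const_sub (PS L)
      simpa using this
    exact (h0.eventually_lt_const (by linarith)).exists
  have hK0 : 0 ≤ PS L - PSK K L := sub_nonneg.mpr (PSK_le_PS hL K)
  -- eventual smallness of the boundary term
  have hT2 : Tendsto (fun n : ℕ => ((2*(K*L.length) : ℝ) * (2 * PS L))/((n:ℝ)+1))
      atTop (𝓝 0) := by
    apply Tendsto.div_atTop tendsto_const_nhds
    exact tendsto_atTop_add_const_right _ _ tendsto_natCast_atTop_atTop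
  have hT2' : ∀ᶠ n : ℕ in atTop, ((2*(K*L.length) : ℝ) * (2 * PS L))/((n:ℝ)+1) < ε/4 := by
    apply hT2.eventually_lt_const (by linarith)
  have hT3' : ∀ᶠ n : ℕ in atTop,
      ‖(∫ x in Ioc (0:ℝ) 1, FF n K L ⌊((n:ℝ)+1)*x⌋ 0)
        - ∫ x in Ioc (0:ℝ) 1, HK K L x 0‖ < ε/4 := by
    have := (tendsto_step_integral K hL).sub_const (∫ x in Ioc (0:ℝ) 1, HK K L x 0)
    rw [sub_self] at this
    have h2 := this.norm
    rw [norm_zero] at h2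
    exact h2.eventually_lt_const (by linarith)
  rw [eventually_atTop] at hT2' hT3'
  obtain ⟨N2, hN2⟩ := hT2'
  obtain ⟨N3, hN3⟩ := hT3'
  refine ⟨max N2 N3, fun n hn => ?_⟩
  have hn2 := hN2 n (le_trans (le_max_left _ _) hn)
  have hn3 := hN3 n (le_trans (le_max_right _ _) hn)
  have hnpos : (0:ℝ) < (n:ℝ)+1 := by positivity
  have hnorm : ‖((n:ℂ)+1)‖ = (n:ℝ)+1 := by
    rw [show ((n:ℂ)+1) = (((n+1 : ℕ) : ℂ)) from by push_cast; ring, Complex.norm_natCast]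
    push_cast; ring
  set A := ∑ i : Fin (n+1), Em n L i i with hA
  set B := ∑ i : Fin (n+1), EmK n K L i i with hB
  set C := ∑ i : Fin (n+1), FF n K L (i:ℤ) 0 with hC
  set SI := ∫ x in Ioc (0:ℝ) 1, FF n K L ⌊((n:ℝ)+1)*x⌋ 0 with hSI
  set HKI := ∫ x in Ioc (0:ℝ) 1, HK K L x 0 with hHKI
  set HII := ∫ x in Ioc (0:ℝ) 1, HI L x 0 with hHII
  have hCSI : C / ((n:ℂ)+1) = SI := by
    rw [hSI, integral_step n K hL, hC]
    rw [Fin.sum_univ_eq_sum_range (fun i => FF n K L (i:ℤ) 0)]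
    rw [← Finset.smul_sum]
    rw [div_eq_inv_mul]
    rw [Complex.real_smul]
    congr 1
    push_cast
    ring
  have key : A / ((n:ℂ)+1) - HII
      = (A - B)/((n:ℂ)+1) + (B - C)/((n:ℂ)+1) + (SI - HKI) + (HKI - HII) := by
    rw [← hCSI]; ring
  rw [dist_eq_norm, key]
  have e1 : ‖(A - B)/((n:ℂ)+1)‖ ≤ PS L - PSK K L := by
    rw [norm_div, hnorm, div_le_iff₀ hnpos]
    calc ‖A - B‖ ≤ ((n:ℝ)+1) * (PS L - PSK K L) := A1 n K hL
      _ = (PS L - PSK K L) * ((n:ℝ)+1) := by ring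
  have e2 : ‖(B - C)/((n:ℂ)+1)‖ < ε/4 := by
    rw [norm_div, hnorm, div_lt_iff₀ hnpos]
    calc ‖B - C‖ ≤ (2*(K*L.length) : ℝ) * (2 * PS L) := A2 n K hL
      _ = ((2*(K*L.length) : ℝ) * (2 * PS L))/((n:ℝ)+1) * ((n:ℝ)+1) := by
          field_simp
      _ < ε/4 * ((n:ℝ)+1) := by
          apply mul_lt_mul_of_pos_right hn2 hnpos
  have e4 : ‖HKI - HII‖ ≤ PS L - PSK K L := integral_HK_sub_HI K hL
  calc ‖(A - B)/((n:ℂ)+1) + (B - C)/((n:ℂ)+1) + (SI - HKI) + (HKI - HII)‖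
      ≤ ‖(A - B)/((n:ℂ)+1)‖ + ‖(B - C)/((n:ℂ)+1)‖ + ‖SI - HKI‖ + ‖HKI - HII‖ := by
        refine (norm_add_le _ _).trans ?_
        have h1 := norm_add_le ((A - B)/((n:ℂ)+1) + (B - C)/((n:ℂ)+1)) (SI - HKI)
        have h2 := norm_add_le ((A - B)/((n:ℂ)+1)) ((B - C)/((n:ℂ)+1))
        linarith [norm_add_le ((A - B)/((n:ℂ)+1) + (B - C)/((n:ℂ)+1) + (SI - HKI)) (HKI - HII)]
    _ < ε := by
        have := hn3
        linarith
  done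

end KMSaux

namespace KMSaux
open Filter Matrix Set MeasureTheory Topology

lemma integral_exp_sI (s : ℤ) :
    (∫ t in (0:ℝ)..(2*Real.pi), Complex.exp ((s:ℂ)*(t:ℝ)*Complex.I))
      = if s = 0 then ((2*Real.pi : ℝ) : ℂ) else 0 := by
  by_cases hs : s = 0
  · subst hs
    rw [if_pos rfl]
    simp
  · rw [if_neg hs]
    have hc : ((s:ℂ)*Complex.I) ≠ 0 :=
      mul_ne_zero (Int.cast_ne_zero.mpr hs) Complex.I_ne_zero
    have heq : EqOn (fun t : ℝ => Complex.exp ((s:ℂ)*(t:ℝ)*Complex.I))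
        (fun t : ℝ => Complex.exp (((s:ℂ)*Complex.I)*(t:ℝ))) (uIcc (0:ℝ) (2*Real.pi)) := by
      intro t _
      simp only []
      congr 1
      ring
    rw [intervalIntegral.integral_congr heq, integral_exp_mul_complex hc]
    have h1 : Complex.exp ((s:ℂ)*Complex.I*((2*Real.pi : ℝ):ℂ)) = 1 := by
      rw [show ((s:ℂ)*Complex.I*((2*Real.pi : ℝ):ℂ)) = (s:ℂ)*(2*(Real.pi:ℂ)*Complex.I)
        from by push_cast; ring]
      exact Complex.exp_int_mul_two_pi_mul_I s
    rw [h1]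
    simp

lemma summable_symbol_term {c : ℤ → ℝ → ℂ} (hc : Good c) {x : ℝ}
    (hx : x ∈ Icc (0:ℝ) 1) (t : ℝ) :
    Summable fun k : ℤ => c k x * Complex.exp ((k:ℂ)*(t:ℝ)*Complex.I) := by
  apply Summable.of_norm
  refine hc.sum.of_nonneg_of_le (fun k => norm_nonneg _) fun k => ?_
  rw [norm_mul]
  have h1 : ‖Complex.exp ((k:ℂ)*(t:ℝ)*Complex.I)‖ = 1 := by
    rw [show ((k:ℂ)*(t:ℝ)*Complex.I) = (((k:ℝ)*t : ℝ):ℂ)*Complex.I from by push_cast; ring]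
    exact Complex.norm_exp_ofReal_mul_I _
  rw [h1, mul_one]
  exact norm_le_SN hc k hx

lemma norm_symbol_le {c : ℤ → ℝ → ℂ} (hc : Good c) {x : ℝ}
    (hx : x ∈ Icc (0:ℝ) 1) (t : ℝ) : ‖symbolFun c x t‖ ≤ S c := by
  have hb : ∀ k : ℤ, ‖c k x * Complex.exp ((k:ℂ)*(t:ℝ)*Complex.I)‖ ≤ SN c k := by
    intro k
    rw [norm_mul]
    have h1 : ‖Complex.exp ((k:ℂ)*(t:ℝ)*Complex.I)‖ = 1 := by
      rw [show ((k:ℂ)*(t:ℝ)*Complex.I) = (((k:ℝ)*t : ℝ):ℂ)*Complex.I from by push_cast; ring]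
      exact Complex.norm_exp_ofReal_mul_I _
    rw [h1, mul_one]
    exact norm_le_SN hc k hx
  have hs : Summable fun k : ℤ => ‖c k x * Complex.exp ((k:ℂ)*(t:ℝ)*Complex.I)‖ :=
    hc.sum.of_nonneg_of_le (fun k => norm_nonneg _) hb
  calc ‖symbolFun c x t‖ ≤ ∑' k : ℤ, ‖c k x * Complex.exp ((k:ℂ)*(t:ℝ)*Complex.I)‖ :=
        norm_tsum_le_tsum_norm hs
    _ ≤ ∑' k : ℤ, SN c k := Summable.tsum_le_tsum hb hs hc.sum
    _ = S c := rfl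

lemma continuous_symbol {c : ℤ → ℝ → ℂ} (hc : Good c) {x : ℝ}
    (hx : x ∈ Icc (0:ℝ) 1) : Continuous fun t : ℝ => symbolFun c x t := by
  apply continuous_tsum (u := SN c) ?_ hc.sum ?_
  · intro k
    apply continuous_const.mul
    apply Complex.continuous_exp.comp
    continuity
  · intro k t
    rw [norm_mul]
    have h1 : ‖Complex.exp ((k:ℂ)*(t:ℝ)*Complex.I)‖ = 1 := by
      rw [show ((k:ℂ)*(t:ℝ)*Complex.I) = (((k:ℝ)*t : ℝ):ℂ)*Complex.I from by push_cast; ring]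
      exact Complex.norm_exp_ofReal_mul_I _
    rw [h1, mul_one]
    exact norm_le_SN hc k hx

lemma continuous_symbol_prod {L : List (ℤ → ℝ → ℂ)} (hL : GoodL L) {x : ℝ}
    (hx : x ∈ Icc (0:ℝ) 1) :
    Continuous fun t : ℝ => (L.map (fun c => symbolFun c x t)).prod := by
  induction L with
  | nil => simpa using continuous_const
  | cons c L ih =>
      have hc : Good c := hL c (by simp)
      have hL' : GoodL L := fun d hd => hL d (by simp [hd])
      simp only [List.map_cons, List.prod_cons]
      exact (continuous_symbol hc hx).mul (ih hL')

lemma norm_symbol_prod_le {L : List (ℤ → ℝ → ℂ)} (hL : GoodL L) {x : ℝ}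
    (hx : x ∈ Icc (0:ℝ) 1) (t : ℝ) :
    ‖(L.map (fun c => symbolFun c x t)).prod‖ ≤ PS L := by
  induction L with
  | nil => simp [PS]
  | cons c L ih =>
      have hc : Good c := hL c (by simp)
      have hL' : GoodL L := fun d hd => hL d (by simp [hd])
      simp only [List.map_cons, List.prod_cons]
      rw [PS, norm_mul]
      exact mul_le_mul (norm_symbol_le hc hx t) (ih hL') (norm_nonneg _) (S_nonneg c)

lemma fourier {L : List (ℤ → ℝ → ℂ)} (hL : GoodL L) {x : ℝ} (hx : x ∈ Icc (0:ℝ) 1) :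
    ∀ s : ℤ, (∫ t in (0:ℝ)..(2*Real.pi),
        (L.map (fun c => symbolFun c x t)).prod * Complex.exp ((s:ℂ)*(t:ℝ)*Complex.I))
      = ((2*Real.pi : ℝ):ℂ) * HI L x s := by
  induction L with
  | nil =>
      intro s
      simp only [List.map_nil, List.prod_nil, one_mul, HI]
      rw [integral_exp_sI]
      split <;> simp
  | cons c L ih =>
      intro s
      have hc : Good c := hL c (by simp)
      have hL' : GoodL L := fun d hd => hL d (by simp [hd])
      have hpi : (0:ℝ) ≤ 2*Real.pi := by positivity
      set R : ℝ → ℂ := fun t => (L.map (fun d => symbolFun d x t)).prod with hR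
      set G : ℤ → ℝ → ℂ := fun k t =>
        c k x * (R t * Complex.exp ((((s+k : ℤ)):ℂ)*(t:ℝ)*Complex.I)) with hG
      have hpt : ∀ t : ℝ, ((c :: L).map (fun d => symbolFun d x t)).prod
          * Complex.exp ((s:ℂ)*(t:ℝ)*Complex.I) = ∑' k : ℤ, G k t := by
        intro t
        simp only [List.map_cons, List.prod_cons, ← hR]
        rw [show symbolFun c x t * R t * Complex.exp ((s:ℂ)*(t:ℝ)*Complex.I)
            = symbolFun c x t * (R t * Complex.exp ((s:ℂ)*(t:ℝ)*Complex.I)) from by ring]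
        rw [symbolFun, ← tsum_mul_right]
        apply tsum_congr
        intro k
        rw [hG]
        simp only []
        rw [show (((s+k : ℤ)):ℂ)*(t:ℝ)*Complex.I
            = (s:ℂ)*(t:ℝ)*Complex.I + (k:ℂ)*(t:ℝ)*Complex.I from by push_cast; ring,
          Complex.exp_add]
        ring
      have hGcont : ∀ k : ℤ, Continuous (G k) := by
        intro k
        apply continuous_const.mul
        apply ((continuous_symbol_prod hL' hx).mul ?_)
        apply Complex.continuous_exp.comp
        continuity
      have hGint : ∀ k : ℤ, Integrable (G k) (volume.restrict (Ioc (0:ℝ) (2*Real.pi))) :=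
        fun k => (hGcont k).integrableOn_Ioc
      have hGnorm : ∀ (k : ℤ) (t : ℝ), ‖G k t‖ ≤ SN c k * PS L := by
        intro k t
        rw [hG]
        simp only []
        rw [norm_mul, norm_mul]
        have h1 : ‖Complex.exp ((((s+k : ℤ)):ℂ)*(t:ℝ)*Complex.I)‖ = 1 := by
          rw [show ((((s+k : ℤ)):ℂ)*(t:ℝ)*Complex.I)
              = ((((s+k : ℤ):ℝ)*t : ℝ):ℂ)*Complex.I from by push_cast; ring]
          exact Complex.norm_exp_ofReal_mul_I _
        rw [h1, mul_one]
        exact mul_le_mul (norm_le_SN hc k hx) (norm_symbol_prod_le hL' hx t)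
          (norm_nonneg _) (SN_nonneg c k)
      have hsum : Summable fun k : ℤ => ∫ t in Ioc (0:ℝ) (2*Real.pi), ‖G k t‖ := by
        apply (hc.sum.mul_right (PS L * (2*Real.pi))).of_nonneg_of_le
          (fun k => integral_nonneg fun t => norm_nonneg _)
        intro k
        calc (∫ t in Ioc (0:ℝ) (2*Real.pi), ‖G k t‖)
            ≤ ∫ _t in Ioc (0:ℝ) (2*Real.pi), (SN c k * PS L) := by
              apply setIntegral_mono (hGint k).norm (integrable_const _)
              exact fun t => hGnorm k t
          _ = SN c k * (PS L * (2*Real.pi)) := by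
              rw [setIntegral_const, measureReal_def, Real.volume_Ioc, smul_eq_mul,
                ENNReal.toReal_ofReal (by rw [sub_zero]; positivity)]
              ring
      rw [intervalIntegral.integral_congr (fun t _ => hpt t),
        intervalIntegral.integral_of_le hpi,
        ← integral_tsum_of_summable_integral_norm hGint hsum]
      have hint : ∀ k : ℤ, (∫ t in Ioc (0:ℝ) (2*Real.pi), G k t)
          = c k x * (((2*Real.pi:ℝ):ℂ) * HI L x (s+k)) := by
        intro k
        rw [hG]
        simp only []
        rw [integral_const_mul]
        congr 1
        rw [← intervalIntegral.integral_of_le hpi]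
        exact ih hL' (s+k)
      rw [tsum_congr hint, HI]
      calc ∑' (k : ℤ), c k x * (((2*Real.pi:ℝ):ℂ) * HI L x (s+k))
          = ∑' (k : ℤ), ((2*Real.pi:ℝ):ℂ) * (c k x * HI L x (s+k)) :=
            tsum_congr fun k => by ring
        _ = ((2*Real.pi:ℝ):ℂ) * ∑' (k : ℤ), (c k x * HI L x (s+k)) := tsum_mul_left

end KMSaux

namespace KMSaux
open Filter Matrix Set MeasureTheory Topology

noncomputable def bfun (a : ℤ → ℝ → ℂ) : ℤ → ℝ → ℂ := fun k x => starRingEnd ℂ (a (-k) x)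

lemma SN_bfun (a : ℤ → ℝ → ℂ) (k : ℤ) : SN (bfun a) k = SN a (-k) := by
  rw [SN, SN, supNorm, supNorm]
  congr 1
  funext x
  simp [bfun]

lemma Good_bfun {a : ℤ → ℝ → ℂ} (ha : Good a) : Good (bfun a) := by
  constructor
  · intro k
    filter_upwards [ha.cont (-k)] with x hx
    exact (Complex.continuous_conj.continuousAt).comp_continuousWithinAt hx
  · intro k
    have heq : (fun x : Icc (0:ℝ) 1 => ‖bfun a k x‖)
        = (fun x : Icc (0:ℝ) 1 => ‖a (-k) x‖) := by
      funext x; simp [bfun]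
    rw [heq]
    exact ha.bdd (-k)
  · have heq : SN (bfun a) = fun k => SN a (-k) := funext (SN_bfun a)
    rw [heq]
    exact ha.sum.comp_injective neg_injective

lemma kms_bfun (a : ℤ → ℝ → ℂ) (n : ℕ) : kms (bfun a) n = (kms a n)ᴴ := by
  ext i j
  rw [conjTranspose_apply, kms, kms, bfun, starRingEnd_apply]
  congr 2
  · ring
  · ring

lemma symbol_bfun (a : ℤ → ℝ → ℂ) (x t : ℝ) :
    symbolFun (bfun a) x t = starRingEnd ℂ (symbolFun a x t) := by
  rw [symbolFun, symbolFun, starRingEnd_apply, tsum_star]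
  rw [← (Equiv.neg ℤ).tsum_eq (fun k : ℤ => star (a k x * Complex.exp ((k:ℂ)*(t:ℝ)*Complex.I)))]
  apply tsum_congr
  intro k
  show bfun a k x * Complex.exp ((k:ℂ)*(t:ℝ)*Complex.I)
      = star (a (-k) x * Complex.exp (((-k:ℤ):ℂ)*(t:ℝ)*Complex.I))
  rw [star_mul', bfun, starRingEnd_apply]
  congr 1
  rw [show star (Complex.exp (((-k:ℤ):ℂ)*(t:ℝ)*Complex.I))
      = starRingEnd ℂ (Complex.exp (((-k:ℤ):ℂ)*(t:ℝ)*Complex.I)) from rfl]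
  rw [← Complex.exp_conj]
  congr 1
  rw [RingHom.map_mul, RingHom.map_mul, Complex.conj_I, Complex.conj_ofReal, map_intCast]
  push_cast
  ring

lemma GoodL_rep (a : ℤ → ℝ → ℂ) (ha : Good a) (p q : ℕ) :
    GoodL (List.replicate p a ++ List.replicate q (bfun a)) := by
  intro c hc
  rcases List.mem_append.mp hc with h | h
  · rw [List.eq_of_mem_replicate h]; exact ha
  · rw [List.eq_of_mem_replicate h]; exact Good_bfun ha

lemma Em_rep (a : ℤ → ℝ → ℂ) (n p q : ℕ) :
    Em n (List.replicate p a ++ List.replicate q (bfun a))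
      = (kms a n)^p * ((kms a n)ᴴ)^q := by
  rw [Em, List.map_append, List.prod_append, List.map_replicate, List.map_replicate,
    List.prod_replicate, List.prod_replicate, kms_bfun]

lemma symbolprod_rep (a : ℤ → ℝ → ℂ) (x t : ℝ) (p q : ℕ) :
    (((List.replicate p a ++ List.replicate q (bfun a)).map
        (fun c => symbolFun c x t)).prod : ℂ)
      = (symbolFun a x t)^p * (starRingEnd ℂ (symbolFun a x t))^q := by
  rw [List.map_append, List.prod_append, List.map_replicate, List.map_replicate,
    List.prod_replicate, List.prod_replicate, symbol_bfun]

lemma tendsto_inv_nat : Tendsto (fun n : ℕ => 1/(n:ℂ)) atTop (𝓝 0) := by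
  apply squeeze_zero_norm (a := fun n : ℕ => 1/(n:ℝ))
  · intro n
    rw [norm_div, norm_one, Complex.norm_natCast]
  · exact tendsto_one_div_atTop_nhds_zero_nat

lemma tendsto_ratio : Tendsto (fun n : ℕ => ((n:ℂ)+1)/(n:ℂ)) atTop (𝓝 1) := by
  have h1 : Tendsto (fun n : ℕ => 1 + 1/(n:ℂ)) atTop (𝓝 1) := by
    have := tendsto_const_nhds (x := (1:ℂ)) (f := atTop (α := ℕ)) |>.add tendsto_inv_nat
    simpa using this
  apply h1.congr'
  filter_upwards [eventually_ge_atTop 1] with n hn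
  have hn0 : (n:ℂ) ≠ 0 := Nat.cast_ne_zero.mpr (by omega)
  field_simp

end KMSaux

/-- Mixed-moment trace asymptotics for normal KMS matrices:
`Tr[T_n^p (T_n^*)^q] = ((n+1)/(2π)) ∬ a^p conj(a)^q dt dx + o(n)`. -/
theorem stmt5 (a : ℤ → ℝ → ℂ)
    (hR : ∀ k, RiemannIntegrableOn01 (a k))
    (hbdd : ∀ k, BddAbove (Set.range fun x : Set.Icc (0:ℝ) 1 => ‖a k x‖))
    (hsum : Summable fun k : ℤ => supNorm (a k))
    (hnormal : ∀ n, IsStarNormal (kms a n)) (p q : ℕ) :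
    Tendsto (fun n : ℕ =>
        (Matrix.trace ((kms a n) ^ p * ((kms a n)ᴴ) ^ q)
          - (((n : ℂ) + 1) / (2 * Real.pi)) *
            ∫ x in (0:ℝ)..1, ∫ t in (0:ℝ)..(2 * Real.pi),
              (symbolFun a x t) ^ p * (starRingEnd ℂ (symbolFun a x t)) ^ q) / (n : ℂ))
      atTop (nhds 0) := by
  have ha : KMSaux.Good a := ⟨fun k => (hR k).2, hbdd, hsum⟩
  have hL : KMSaux.GoodL (List.replicate p a ++ List.replicate q (KMSaux.bfun a)) :=
    KMSaux.GoodL_rep a ha p q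
  have hmaster := KMSaux.master hL
  have hinner : ∀ x ∈ Icc (0:ℝ) 1,
      (∫ t in (0:ℝ)..(2*Real.pi),
          (symbolFun a x t)^p * (starRingEnd ℂ (symbolFun a x t))^q)
        = ((2*Real.pi:ℝ):ℂ)
            * KMSaux.HI (List.replicate p a ++ List.replicate q (KMSaux.bfun a)) x 0 := by
    intro x hx
    have h := KMSaux.fourier hL hx 0
    have h2 : EqOn (fun t : ℝ => (symbolFun a x t)^p * (starRingEnd ℂ (symbolFun a x t))^q)
        (fun t : ℝ => ((List.replicate p a ++ List.replicate q (KMSaux.bfun a)).map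
            (fun c => symbolFun c x t)).prod
          * Complex.exp (((0:ℤ):ℂ)*(t:ℝ)*Complex.I)) (uIcc (0:ℝ) (2*Real.pi)) := by
      intro t _
      simp only [KMSaux.symbolprod_rep a x t p q]
      simp
    rw [intervalIntegral.integral_congr h2, h]
  have houter : (∫ x in (0:ℝ)..1, ∫ t in (0:ℝ)..(2*Real.pi),
        (symbolFun a x t)^p * (starRingEnd ℂ (symbolFun a x t))^q)
      = ((2*Real.pi:ℝ):ℂ) * ∫ x in Ioc (0:ℝ) 1,
          KMSaux.HI (List.replicate p a ++ List.replicate q (KMSaux.bfun a)) x 0 := by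
    rw [intervalIntegral.integral_of_le (by norm_num : (0:ℝ) ≤ 1)]
    rw [setIntegral_congr_fun measurableSet_Ioc
      (fun x hx => hinner x (Ioc_subset_Icc_self hx))]
    rw [integral_const_mul]
  have htrace : ∀ n : ℕ, Matrix.trace ((kms a n)^p * ((kms a n)ᴴ)^q)
      = ∑ i : Fin (n+1),
          KMSaux.Em n (List.replicate p a ++ List.replicate q (KMSaux.bfun a)) i i := by
    intro n
    rw [← KMSaux.Em_rep a n p q]
    rfl
  set V := ∫ x in Ioc (0:ℝ) 1,
      KMSaux.HI (List.replicate p a ++ List.replicate q (KMSaux.bfun a)) x 0 with hV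
  have hEq : ∀ᶠ n : ℕ in atTop,
      (Matrix.trace ((kms a n) ^ p * ((kms a n)ᴴ) ^ q)
          - (((n : ℂ) + 1) / (2 * Real.pi)) *
            ∫ x in (0:ℝ)..1, ∫ t in (0:ℝ)..(2 * Real.pi),
              (symbolFun a x t) ^ p * (starRingEnd ℂ (symbolFun a x t)) ^ q) / (n : ℂ)
        = (((n:ℂ)+1)/(n:ℂ)) * ((∑ i : Fin (n+1),
            KMSaux.Em n (List.replicate p a ++ List.replicate q (KMSaux.bfun a)) i i)
              / ((n:ℂ)+1) - V) := by
    filter_upwards [eventually_ge_atTop 1] with n hn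
    have hn0 : (n:ℂ) ≠ 0 := Nat.cast_ne_zero.mpr (by omega)
    have hn1 : ((n:ℂ)+1) ≠ 0 := by
      rw [show ((n:ℂ)+1) = ((n+1 : ℕ):ℂ) from by push_cast; ring]
      exact Nat.cast_ne_zero.mpr (by omega)
    have hpi : ((2:ℂ) * (Real.pi:ℂ)) ≠ 0 :=
      mul_ne_zero two_ne_zero (Complex.ofReal_ne_zero.mpr Real.pi_ne_zero)
    rw [htrace n, houter]
    have hpush : ((2*Real.pi:ℝ):ℂ) = 2 * (Real.pi:ℂ) := by push_cast; ring
    rw [hpush]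
    field_simp
  have h2 : Tendsto (fun n : ℕ => (∑ i : Fin (n+1),
      KMSaux.Em n (List.replicate p a ++ List.replicate q (KMSaux.bfun a)) i i)
        / ((n:ℂ)+1) - V) atTop (𝓝 0) := by
    have := hmaster.sub_const V
    simpa using this
  have h3 := KMSaux.tendsto_ratio.mul h2
  rw [mul_zero] at h3
  exact h3.congr' (Filter.EventuallyEq.symm hEq)
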